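/- Let X_S ∈ ℝ^{d×n_s} and X_T ∈ ℝ^{d×n_t} with n_s, n_t ≥ 1, let X ∈ ℝ^{d×(n_s+n_t)} be the horizontal concatenation of X_S and X_T, and assume X has no zero rows. Let Λ be the diagonal d×d matrix with Λ_{ii} equal to the squared Euclidean norm of the i-th row of X, and set ΔM = (1/n_s)·X_S·X_Sᵀ − (1/n_t)·X_T·X_Tᵀ. If γ₁ ≥ (λ_d(X·Xᵀ) − λ₁(X·Xᵀ)) / λ₁(Λ), where λ₁(X·Xᵀ) and λ_d(X·Xᵀ) are the smallest and largest eigenvalues of X·Xᵀ and λ₁(Λ) is the smallest diagonal entry of Λ, and P = (X·Xᵀ + γ₁·Λ)⁻¹ · X·Xᵀ, then ‖ΔM‖_F² ≥ ‖Pᵀ·ΔM·P‖_F². -/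

import Mathlib

open Matrix
set_option maxHeartbeats 1000000
open scoped MatrixOrder

attribute [local instance] Matrix.frobeniusNormedAddCommGroup

private lemma real_ct {m n : Type*} (A : Matrix m n ℝ) : Aᴴ = Aᵀ := by
  ext i j; simp [Matrix.conjTranspose_apply]

private lemma smul_one_sub_psd {n : Type*} [Fintype n] [DecidableEq n] {A : Matrix n n ℝ}
    (hA : A.IsHermitian) {c : ℝ} (hc : ∀ i, hA.eigenvalues i ≤ c) :
    (c • (1 : Matrix n n ℝ) - A).PosSemidef := by
  set U : Matrix n n ℝ := (hA.eigenvectorUnitary : Matrix n n ℝ) with hUdef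
  have hU : U * star U = 1 := mem_unitaryGroup_iff.mp hA.eigenvectorUnitary.2
  have key : c • (1 : Matrix n n ℝ) - A
      = U * diagonal (fun i => c - hA.eigenvalues i) * star U := by
    conv_lhs => rw [hA.spectral_theorem, Unitary.conjStarAlgAut_apply]
    have hd : diagonal (fun i => c - hA.eigenvalues i)
        = c • (1 : Matrix n n ℝ) - diagonal (RCLike.ofReal ∘ hA.eigenvalues) := by
      simp [RCLike.ofReal_real_eq_id, ← diagonal_sub, diagonal_smul, Matrix.smul_one_eq_diagonal]
    rw [hd, Matrix.mul_sub, Matrix.sub_mul, Matrix.mul_smul, mul_one, Matrix.smul_mul, hU]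
  rw [key, Matrix.star_eq_conjTranspose U]
  exact (PosSemidef.diagonal (fun i => sub_nonneg.mpr (hc i))).mul_mul_conjTranspose_same U

private lemma sub_smul_one_psd {n : Type*} [Fintype n] [DecidableEq n] {A : Matrix n n ℝ}
    (hA : A.IsHermitian) {c : ℝ} (hc : ∀ i, c ≤ hA.eigenvalues i) :
    (A - c • (1 : Matrix n n ℝ)).PosSemidef := by
  set U : Matrix n n ℝ := (hA.eigenvectorUnitary : Matrix n n ℝ) with hUdef
  have hU : U * star U = 1 := mem_unitaryGroup_iff.mp hA.eigenvectorUnitary.2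
  have key : A - c • (1 : Matrix n n ℝ)
      = U * diagonal (fun i => hA.eigenvalues i - c) * star U := by
    conv_lhs => rw [hA.spectral_theorem, Unitary.conjStarAlgAut_apply]
    have hd : diagonal (fun i => hA.eigenvalues i - c)
        = diagonal (RCLike.ofReal ∘ hA.eigenvalues) - c • (1 : Matrix n n ℝ) := by
      simp [RCLike.ofReal_real_eq_id, ← diagonal_sub, diagonal_smul, Matrix.smul_one_eq_diagonal]
    rw [hd, Matrix.mul_sub, Matrix.sub_mul, Matrix.mul_smul, mul_one, Matrix.smul_mul, hU]
  rw [key, Matrix.star_eq_conjTranspose U]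
  exact (PosSemidef.diagonal (fun i => sub_nonneg.mpr (hc i))).mul_mul_conjTranspose_same U

private lemma psd_trace_nonneg {n : Type*} [Fintype n] [DecidableEq n] {A : Matrix n n ℝ}
    (hA : A.PosSemidef) : 0 ≤ A.trace := by
  rw [Matrix.trace]
  refine Finset.sum_nonneg fun i _ => ?_
  have := hA.dotProduct_mulVec_nonneg (Pi.single i 1)
  simpa [dotProduct, Matrix.mulVec, Pi.single_apply] using this

private lemma norm_sq_eq_trace {n : Type*} [Fintype n] [DecidableEq n] (N : Matrix n n ℝ) :
    ‖N‖ ^ 2 = (Nᵀ * N).trace := by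
  have h2 : (0:ℝ) ≤ ∑ i, ∑ j, ‖N i j‖ ^ (2 : ℝ) :=
    Finset.sum_nonneg fun i _ => Finset.sum_nonneg fun j _ =>
      Real.rpow_nonneg (norm_nonneg _) _
  rw [Matrix.frobenius_norm_def, ← Real.rpow_natCast _ 2, ← Real.rpow_mul h2]
  norm_num
  rw [Matrix.trace]
  simp only [Matrix.diag, Matrix.mul_apply, Matrix.transpose_apply]
  rw [Finset.sum_comm]
  congr 1; ext i; congr 1; ext j
  rw [pow_two]

private lemma frob_contract {n : Type*} [Fintype n] [DecidableEq n] {P : Matrix n n ℝ}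
    (hS : ((1 : Matrix n n ℝ) - P * Pᵀ).PosSemidef) (M : Matrix n n ℝ) :
    ‖Pᵀ * M * P‖ ^ 2 ≤ ‖M‖ ^ 2 := by
  set S : Matrix n n ℝ := 1 - P * Pᵀ with hSdef
  have hPPt : P * Pᵀ = 1 - S := by rw [hSdef]; abel
  have htr_conj : ∀ C : Matrix n n ℝ, 0 ≤ (Cᵀ * (S * C)).trace := by
    intro C
    have h := hS.conjTranspose_mul_mul_same C
    rw [real_ct] at h
    have := psd_trace_nonneg h
    rwa [Matrix.mul_assoc] at this
  rw [norm_sq_eq_trace, norm_sq_eq_trace]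
  have e1 : (Pᵀ * M * P)ᵀ * (Pᵀ * M * P)
      = Pᵀ * (Mᵀ * (M * P)) - (M * P)ᵀ * (S * (M * P)) := by
    calc (Pᵀ * M * P)ᵀ * (Pᵀ * M * P)
        = Pᵀ * (Mᵀ * ((P * Pᵀ) * (M * P))) := by
          simp only [Matrix.transpose_mul, Matrix.transpose_transpose, Matrix.mul_assoc]
      _ = Pᵀ * (Mᵀ * (M * P)) - (M * P)ᵀ * (S * (M * P)) := by
          rw [hPPt]
          simp only [Matrix.sub_mul, Matrix.mul_sub, Matrix.one_mul, Matrix.transpose_mul,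
            Matrix.mul_assoc]
  rw [e1, Matrix.trace_sub]
  have h2 := htr_conj (M * P)
  have h3 : (Pᵀ * (Mᵀ * (M * P))).trace = (Mᵀ * M).trace - ((Mᵀ * M) * S).trace := by
    rw [Matrix.trace_mul_comm]
    have : Mᵀ * (M * P) * Pᵀ = (Mᵀ * M) * (P * Pᵀ) := by
      simp only [Matrix.mul_assoc]
    rw [this, hPPt, Matrix.mul_sub, Matrix.mul_one, Matrix.trace_sub]
  have h4 : 0 ≤ ((Mᵀ * M) * S).trace := by
    set T := CFC.sqrt S with hTdef
    have hT : T * T = S := by rw [hTdef]; exact CFC.sqrt_mul_sqrt_self S hS.nonneg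
    have hTh : Tᵀ = T := by
      have h := (CFC.sqrt_nonneg S).posSemidef.1.eq
      rwa [real_ct] at h
    have e2 : (Mᵀ * M) * S = (Mᵀ * (M * T)) * T := by
      rw [← hT]; simp only [Matrix.mul_assoc]
    rw [e2, Matrix.trace_mul_comm]
    have e3 : T * (Mᵀ * (M * T)) = (M * T)ᵀ * ((M * T)) := by
      simp only [Matrix.transpose_mul, Matrix.mul_assoc, hTh]
    rw [e3]
    have h := Matrix.posSemidef_conjTranspose_mul_self (M * T)
    rw [real_ct] at h
    exact psd_trace_nonneg h
  linarith

private lemma sq_le_smul_of_le_smul_one {n : Type*} [Fintype n] [DecidableEq n]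
    {A : Matrix n n ℝ} (hA : A.PosSemidef) {c : ℝ}
    (h : (c • (1 : Matrix n n ℝ) - A).PosSemidef) :
    (c • A - A * A).PosSemidef := by
  set SA := CFC.sqrt A with hSAdef
  have hsq : SA * SA = A := CFC.sqrt_mul_sqrt_self A hA.nonneg
  have hSAt : SAᴴ = SA := (CFC.sqrt_nonneg A).posSemidef.1
  have hc := h.conjTranspose_mul_mul_same SA
  rw [hSAt] at hc
  have heq : SA * (c • (1 : Matrix n n ℝ) - A) * SA = c • A - A * A := by
    rw [Matrix.mul_sub, Matrix.sub_mul, Matrix.mul_smul, mul_one, Matrix.smul_mul, hsq]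
    congr 1
    rw [← hsq]
    simp only [Matrix.mul_assoc]
  rwa [heq] at hc

private lemma smul_le_sq_of_smul_one_le {n : Type*} [Fintype n] [DecidableEq n]
    {B : Matrix n n ℝ} (hB : B.PosSemidef) {c : ℝ}
    (h : (B - c • (1 : Matrix n n ℝ)).PosSemidef) :
    (B * B - c • B).PosSemidef := by
  set SB := CFC.sqrt B with hSBdef
  have hsq : SB * SB = B := CFC.sqrt_mul_sqrt_self B hB.nonneg
  have hSBt : SBᴴ = SB := (CFC.sqrt_nonneg B).posSemidef.1
  have hc := h.conjTranspose_mul_mul_same SB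
  rw [hSBt] at hc
  have heq : SB * (B - c • (1 : Matrix n n ℝ)) * SB = B * B - c • B := by
    rw [Matrix.mul_sub, Matrix.sub_mul, Matrix.mul_smul, mul_one, Matrix.smul_mul, hsq]
    congr 1
    rw [← hsq]
    simp only [Matrix.mul_assoc]
  rwa [heq] at hc

private lemma contraction_psd {n : Type*} [Fintype n] [DecidableEq n]
    {A B : Matrix n n ℝ} (hAt : Aᵀ = A) (hB : B.PosDef)
    (hd2 : (B * B - A * A).PosSemidef) :
    ((1 : Matrix n n ℝ) - (B⁻¹ * A) * (B⁻¹ * A)ᵀ).PosSemidef := by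
  have hBt : Bᵀ = B := by have h := hB.isHermitian.eq; rwa [real_ct] at h
  have hBdet : IsUnit B.det := hB.det_pos.ne'.isUnit
  have hBinv1 : B⁻¹ * B = 1 := Matrix.nonsing_inv_mul B hBdet
  have hBinv2 : B * B⁻¹ = 1 := Matrix.mul_nonsing_inv B hBdet
  have hBinvt : B⁻¹ᵀ = B⁻¹ := by rw [Matrix.transpose_nonsing_inv, hBt]
  have h := hd2.mul_mul_conjTranspose_same B⁻¹
  rw [real_ct, hBinvt] at h
  have heq : B⁻¹ * (B * B - A * A) * B⁻¹
      = 1 - (B⁻¹ * A) * (B⁻¹ * A)ᵀ := by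
    rw [Matrix.transpose_mul, hAt, hBinvt, Matrix.mul_sub, Matrix.sub_mul]
    congr 1
    · calc B⁻¹ * (B * B) * B⁻¹ = (B⁻¹ * B) * (B * B⁻¹) := by
            simp only [Matrix.mul_assoc]
        _ = 1 := by rw [hBinv1, hBinv2, one_mul]
    · simp only [Matrix.mul_assoc]
  rwa [heq] at h

theorem sfl_layer_decreases_moment_distance {d ns nt : ℕ} (hd : 0 < d)
    (hns : 1 ≤ ns) (hnt : 1 ≤ nt)
    (XS : Matrix (Fin d) (Fin ns) ℝ) (XT : Matrix (Fin d) (Fin nt) ℝ)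
    (X : Matrix (Fin d) (Fin ns ⊕ Fin nt) ℝ) (hX : X = Matrix.fromCols XS XT)
    (hrows : ∀ i, ∃ j, X i j ≠ 0)
    (v : Fin d → ℝ) (hv : ∀ i, v i = ∑ j, X i j ^ 2)
    (ΔM : Matrix (Fin d) (Fin d) ℝ)
    (hΔM : ΔM = (1 / (ns : ℝ)) • (XS * XSᵀ) - (1 / (nt : ℝ)) • (XT * XTᵀ))
    (hH : (X * Xᵀ).IsHermitian) (γ₁ : ℝ)
    (hγ₁ : γ₁ ≥ ((⨆ i, hH.eigenvalues i) - ⨅ i, hH.eigenvalues i) / ⨅ i, v i)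
    (P : Matrix (Fin d) (Fin d) ℝ)
    (hP : P = (X * Xᵀ + γ₁ • Matrix.diagonal v)⁻¹ * (X * Xᵀ)) :
    ‖Pᵀ * ΔM * P‖ ^ 2 ≤ ‖ΔM‖ ^ 2 := by
  haveI : Nonempty (Fin d) := ⟨⟨0, hd⟩⟩
  set A : Matrix (Fin d) (Fin d) ℝ := X * Xᵀ with hAdef
  set Λ : Matrix (Fin d) (Fin d) ℝ := Matrix.diagonal v with hΛdef
  set B : Matrix (Fin d) (Fin d) ℝ := A + γ₁ • Λ with hBdef
  set lmax : ℝ := ⨆ i, hH.eigenvalues i with hlmax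
  set lmin : ℝ := ⨅ i, hH.eigenvalues i with hlmin
  set mv : ℝ := ⨅ i, v i with hmv
  -- basic positivity of v
  have hv_pos : ∀ i, 0 < v i := by
    intro i
    rw [hv i]
    obtain ⟨j, hj⟩ := hrows i
    exact Finset.sum_pos' (fun k _ => sq_nonneg _)
      ⟨j, Finset.mem_univ j, by positivity⟩
  -- A is PSD
  have hA_psd : A.PosSemidef := by
    have := Matrix.posSemidef_self_mul_conjTranspose X
    rwa [real_ct] at this
  -- A symmetric
  have hAt : Aᵀ = A := by have h := hH.eq; rwa [real_ct] at h
  -- diagonal entries of A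
  have hAdiag : ∀ i, A i i = v i := by
    intro i
    rw [hv i]
    simp [hAdef, Matrix.mul_apply, pow_two]
  -- eigenvalue bounds
  have hbddA : BddAbove (Set.range hH.eigenvalues) := Set.Finite.bddAbove (Set.finite_range _)
  have hbddB : BddBelow (Set.range hH.eigenvalues) := Set.Finite.bddBelow (Set.finite_range _)
  have heig_le : ∀ i, hH.eigenvalues i ≤ lmax := fun i => le_ciSup hbddA i
  have heig_ge : ∀ i, lmin ≤ hH.eigenvalues i := fun i => ciInf_le hbddB i
  have heig_nonneg : ∀ i, 0 ≤ hH.eigenvalues i := fun i => hA_psd.eigenvalues_nonneg i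
  have hlmin_nonneg : 0 ≤ lmin := le_ciInf heig_nonneg
  have hlmin_le_lmax : lmin ≤ lmax := le_trans (heig_ge ⟨0, hd⟩) (heig_le ⟨0, hd⟩)
  -- mv > 0 and mv ≤ v i
  have hbv : BddBelow (Set.range v) := Set.Finite.bddBelow (Set.finite_range _)
  have hmv_le : ∀ i, mv ≤ v i := fun i => ciInf_le hbv i
  have hmv_pos : 0 < mv := by
    obtain ⟨i, _, hi⟩ := Finset.exists_min_image Finset.univ v ⟨⟨0, hd⟩, Finset.mem_univ _⟩
    have : mv = v i := le_antisymm (hmv_le i) (le_ciInf fun j => hi j (Finset.mem_univ j))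
    rw [this]; exact hv_pos i
  -- lmax > 0
  have hlmax_pos : 0 < lmax := by
    by_contra h
    push_neg at h
    have hz : ∀ i, hH.eigenvalues i = 0 :=
      fun i => le_antisymm (le_trans (heig_le i) h) (heig_nonneg i)
    have hA0 : A = 0 := by
      have := hH.spectral_theorem
      rw [funext hz] at this
      simpa using this
    have := hAdiag ⟨0, hd⟩
    rw [hA0] at this
    simp at this
    exact absurd this.symm (ne_of_gt (hv_pos ⟨0, hd⟩))
  have hlmax_nonneg : 0 ≤ lmax := le_of_lt hlmax_pos
  -- γ₁ bounds
  have hγ_nonneg : 0 ≤ γ₁ :=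
    le_trans (div_nonneg (sub_nonneg.mpr hlmin_le_lmax) (le_of_lt hmv_pos)) hγ₁
  have hkey : lmax - lmin ≤ γ₁ * mv := by
    have := (div_le_iff₀ hmv_pos).mp hγ₁
    linarith
  -- γ₁ • Λ is PSD
  have hΛγ_psd : (γ₁ • Λ).PosSemidef := by
    rw [hΛdef, ← Matrix.diagonal_smul]
    exact PosSemidef.diagonal fun i => mul_nonneg hγ_nonneg (le_of_lt (hv_pos i))
  -- B - lmax • 1 is PSD
  have hBmax : (B - lmax • (1 : Matrix (Fin d) (Fin d) ℝ)).PosSemidef := by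
    have h1 : (A - lmin • (1 : Matrix (Fin d) (Fin d) ℝ)).PosSemidef :=
      sub_smul_one_psd hH heig_ge
    have h2 : (Matrix.diagonal (fun i => γ₁ * v i - (lmax - lmin))).PosSemidef := by
      refine PosSemidef.diagonal fun i => sub_nonneg.mpr ?_
      calc lmax - lmin ≤ γ₁ * mv := hkey
        _ ≤ γ₁ * v i := mul_le_mul_of_nonneg_left (hmv_le i) hγ_nonneg
    have heq : B - lmax • (1 : Matrix (Fin d) (Fin d) ℝ)
        = (A - lmin • 1) + Matrix.diagonal (fun i => γ₁ * v i - (lmax - lmin)) := by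
      have hd2 : Matrix.diagonal (fun i => γ₁ * v i - (lmax - lmin))
          = γ₁ • Λ - (lmax - lmin) • (1 : Matrix (Fin d) (Fin d) ℝ) := by
        rw [hΛdef, ← Matrix.diagonal_smul, Matrix.smul_one_eq_diagonal, ← diagonal_sub]
        rfl
      rw [hd2, hBdef, sub_smul]
      abel
    rw [heq]
    exact h1.add h2
  -- B is PosDef
  have hB_pd : B.PosDef := by
    have h1 : (lmax • (1 : Matrix (Fin d) (Fin d) ℝ)).PosDef := by
      rw [Matrix.smul_one_eq_diagonal]
      exact Matrix.posDef_diagonal_iff.mpr fun i => hlmax_pos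
    have heq : B = lmax • (1 : Matrix (Fin d) (Fin d) ℝ) + (B - lmax • 1) := by abel
    rw [heq]
    exact h1.add_posSemidef hBmax
  have hBt : Bᵀ = B := by have h := hB_pd.isHermitian.eq; rwa [real_ct] at h
  have hBdet : IsUnit B.det := hB_pd.det_pos.ne'.isUnit
  have hBinv1 : B⁻¹ * B = 1 := Matrix.nonsing_inv_mul B hBdet
  have hBinv2 : B * B⁻¹ = 1 := Matrix.mul_nonsing_inv B hBdet
  have hBinvt : B⁻¹ᵀ = B⁻¹ := by rw [Matrix.transpose_nonsing_inv, hBt]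
  -- B*B - A*A is PSD
  have hBB_AA : (B * B - A * A).PosSemidef := by
    -- B*B - lmax • B
    have t1 : (B * B - lmax • B).PosSemidef :=
      smul_le_sq_of_smul_one_le hB_pd.posSemidef hBmax
    -- lmax • A - A*A
    have t2 : (lmax • A - A * A).PosSemidef :=
      sq_le_smul_of_le_smul_one hA_psd (smul_one_sub_psd hH heig_le)
    -- lmax • (γ₁ • Λ)
    have t3 : (lmax • (γ₁ • Λ)).PosSemidef := by
      rw [hΛdef, ← Matrix.diagonal_smul, ← Matrix.diagonal_smul]
      refine PosSemidef.diagonal fun i => ?_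
      simp only [Pi.smul_apply, smul_eq_mul]
      exact mul_nonneg hlmax_nonneg (mul_nonneg hγ_nonneg (le_of_lt (hv_pos i)))
    have heq : B * B - A * A
        = (B * B - lmax • B) + lmax • (γ₁ • Λ) + (lmax • A - A * A) := by
      have hBA : B - A = γ₁ • Λ := by rw [hBdef]; abel
      rw [← hBA, smul_sub]
      abel
    rw [heq]
    exact (t1.add t3).add t2
  have hPt2 : P = B⁻¹ * A := hP
  have hS : ((1 : Matrix (Fin d) (Fin d) ℝ) - P * Pᵀ).PosSemidef := by
    rw [hPt2]
    exact contraction_psd hAt hB_pd hBB_AA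
  exact frob_contract hS ΔM
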